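/- Let G₁ and G₂ be Gamma densities with common shape a > 0 and rates b ≤ b' respectively, i.e., G₁(t) = b^a t^{a−1} e^{−bt}/Γ(a), G₂(t) = (b')^a t^{a−1} e^{−b't}/Γ(a). Then ∫₀^∞ |G₂(t) − G₁(t)| dt ≤ 2[((b')/b)^a − 1]. -/
import Mathlib


open MeasureTheory

lemma aux_integrable (a r : ℝ) (ha : 0 < a) (hr : 0 < r) :
    IntegrableOn (fun t : ℝ => t ^ (a - 1) * Real.exp (-(r * t))) (Set.Ioi 0) := by
  have h0 : IntegrableOn (fun x : ℝ => Real.exp (-x) * x ^ (a - 1)) (Set.Ioi 0) :=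
    Real.GammaIntegral_convergent ha
  have h1 : IntegrableOn (fun x : ℝ => Real.exp (-(r * x)) * (r * x) ^ (a - 1))
      (Set.Ioi 0) :=
    (MeasureTheory.integrableOn_Ioi_comp_mul_left_iff
      (fun x : ℝ => Real.exp (-x) * x ^ (a - 1)) 0 hr).mpr (by simpa using h0)
  have h2 : IntegrableOn (fun x : ℝ => r ^ (a - 1) * (x ^ (a - 1) * Real.exp (-(r * x))))
      (Set.Ioi 0) := by
    apply h1.congr_fun _ measurableSet_Ioi
    intro x hx
    show Real.exp (-(r * x)) * (r * x) ^ (a - 1)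
        = r ^ (a - 1) * (x ^ (a - 1) * Real.exp (-(r * x)))
    rw [Real.mul_rpow hr.le (le_of_lt hx)]
    ring
  have h3 : IntegrableOn (fun x : ℝ =>
      (r ^ (a - 1))⁻¹ * (r ^ (a - 1) * (x ^ (a - 1) * Real.exp (-(r * x))))) (Set.Ioi 0) :=
    h2.const_mul _
  apply h3.congr_fun _ measurableSet_Ioi
  intro x hx
  show (r ^ (a - 1))⁻¹ * (r ^ (a - 1) * (x ^ (a - 1) * Real.exp (-(r * x))))
      = x ^ (a - 1) * Real.exp (-(r * x))
  have : r ^ (a - 1) ≠ 0 := (Real.rpow_pos_of_pos hr _).ne'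
  field_simp

lemma aux_integral (a r : ℝ) (ha : 0 < a) (hr : 0 < r) :
    ∫ t in Set.Ioi (0 : ℝ), r ^ a * t ^ (a - 1) * Real.exp (-r * t) / Real.Gamma a = 1 := by
  have e : ∀ t : ℝ, r ^ a * t ^ (a - 1) * Real.exp (-r * t) / Real.Gamma a
      = (r ^ a / Real.Gamma a) * (t ^ (a - 1) * Real.exp (-(r * t))) := by
    intro t; rw [neg_mul]; ring
  simp_rw [e]
  rw [MeasureTheory.integral_const_mul, Real.integral_rpow_mul_exp_neg_mul_Ioi ha hr]
  have hΓ : Real.Gamma a ≠ 0 := (Real.Gamma_pos_of_pos ha).ne'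
  rw [Real.div_rpow zero_le_one hr.le, Real.one_rpow]
  field_simp

/-- The `L¹` distance between two Gamma densities with common shape `a` and rates `b ≤ b'` is at
most `2((b'/b)^a - 1)`. -/
theorem stmt_19 (a b b' : ℝ) (ha : 0 < a) (hb : 0 < b) (hbb : b ≤ b')
    (G₁ G₂ : ℝ → ℝ)
    (hG₁ : ∀ t, G₁ t = b ^ a * t ^ (a - 1) * Real.exp (-b * t) / Real.Gamma a)
    (hG₂ : ∀ t, G₂ t = b' ^ a * t ^ (a - 1) * Real.exp (-b' * t) / Real.Gamma a) :
    ∫ t in Set.Ioi (0 : ℝ), |G₂ t - G₁ t| ≤ 2 * ((b' / b) ^ a - 1) := by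
  have hb' : 0 < b' := lt_of_lt_of_le hb hbb
  have hΓ : 0 < Real.Gamma a := Real.Gamma_pos_of_pos ha
  set c : ℝ := (b' / b) ^ a with hc
  have hc1 : 1 ≤ c := Real.one_le_rpow ((le_div_iff₀ hb).mpr (by linarith)) ha.le
  -- rewrite G₁, G₂ as constant multiples of the aux integrand
  have hG₁' : G₁ = fun t => (b ^ a / Real.Gamma a) * (t ^ (a - 1) * Real.exp (-(b * t))) := by
    funext t; rw [hG₁ t, neg_mul]; ring
  have hG₂' : G₂ = fun t => (b' ^ a / Real.Gamma a) * (t ^ (a - 1) * Real.exp (-(b' * t))) := by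
    funext t; rw [hG₂ t, neg_mul]; ring
  have hi₁ : IntegrableOn G₁ (Set.Ioi 0) := by
    rw [hG₁']; exact (aux_integrable a b ha hb).const_mul _
  have hi₂ : IntegrableOn G₂ (Set.Ioi 0) := by
    rw [hG₂']; exact (aux_integrable a b' ha hb').const_mul _
  -- integrals equal 1
  have hI₁ : ∫ t in Set.Ioi (0 : ℝ), G₁ t = 1 := by
    simp_rw [hG₁]; exact aux_integral a b ha hb
  have hI₂ : ∫ t in Set.Ioi (0 : ℝ), G₂ t = 1 := by
    simp_rw [hG₂]; exact aux_integral a b' ha hb'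
  -- key pointwise facts on Ioi 0
  have hcb : c * b ^ a = b' ^ a := by
    rw [hc, Real.div_rpow hb'.le hb.le, div_mul_cancel₀]
    exact (Real.rpow_pos_of_pos hb a).ne'
  have key : ∀ t ∈ Set.Ioi (0 : ℝ), G₂ t ≤ c * G₁ t := by
    intro t ht
    have htp : (0 : ℝ) < t := ht
    have hexp : Real.exp (-(b' * t)) ≤ Real.exp (-(b * t)) := by
      apply Real.exp_le_exp.mpr; nlinarith
    have htr : (0 : ℝ) ≤ t ^ (a - 1) := Real.rpow_nonneg htp.le _
    have e2 : c * G₁ t = (b' ^ a / Real.Gamma a) * (t ^ (a - 1) * Real.exp (-(b * t))) := by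
      rw [hG₁', ← hcb]; ring
    rw [hG₂', e2]
    have hA : (0 : ℝ) ≤ b' ^ a / Real.Gamma a := by
      have : (0:ℝ) < b' ^ a := Real.rpow_pos_of_pos hb' a
      positivity
    exact mul_le_mul_of_nonneg_left (mul_le_mul_of_nonneg_left hexp htr) hA
  have hG₁nn : ∀ t ∈ Set.Ioi (0 : ℝ), 0 ≤ G₁ t := by
    intro t ht
    rw [hG₁ t]
    have htp : (0 : ℝ) < t := ht
    positivity
  -- pointwise bound |G₂ - G₁| ≤ 2(c-1)G₁ + G₁ - G₂
  have hbound : ∀ t ∈ Set.Ioi (0 : ℝ),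
      |G₂ t - G₁ t| ≤ 2 * (c - 1) * G₁ t + G₁ t - G₂ t := by
    intro t ht
    have h1 := key t ht
    have h2 := hG₁nn t ht
    rw [abs_le]
    constructor <;> nlinarith
  -- RHS integrable
  have hiA : IntegrableOn (fun t => 2 * (c - 1) * G₁ t) (Set.Ioi 0) := hi₁.const_mul _
  have hiB : IntegrableOn (fun t => 2 * (c - 1) * G₁ t + G₁ t) (Set.Ioi 0) := by
    exact hiA.add hi₁
  have hiR : IntegrableOn (fun t => 2 * (c - 1) * G₁ t + G₁ t - G₂ t) (Set.Ioi 0) := by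
    exact hiB.sub hi₂
  have habs : IntegrableOn (fun t => |G₂ t - G₁ t|) (Set.Ioi 0) := by
    exact (hi₂.sub hi₁ : Integrable _ _).abs
  have hmono := MeasureTheory.setIntegral_mono_on habs hiR
    measurableSet_Ioi hbound
  calc ∫ t in Set.Ioi (0 : ℝ), |G₂ t - G₁ t|
      ≤ ∫ t in Set.Ioi (0 : ℝ), (2 * (c - 1) * G₁ t + G₁ t - G₂ t) := hmono
    _ = 2 * (c - 1) * (∫ t in Set.Ioi (0 : ℝ), G₁ t)
        + (∫ t in Set.Ioi (0 : ℝ), G₁ t) - ∫ t in Set.Ioi (0 : ℝ), G₂ t := by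
        rw [MeasureTheory.integral_sub hiB hi₂,
          MeasureTheory.integral_add hiA hi₁,
          MeasureTheory.integral_const_mul]
    _ = 2 * (c - 1) := by rw [hI₁, hI₂]; ring
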